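/- The improper integral ∫₀^∞ [ z/((1+2z)(z+1)²) + arctan(z/√(1+2z))/(1+2z)^{3/2} ] dz equals 1. -/

import Mathlib

open MeasureTheory Filter Real

private noncomputable def splitF : ℝ → ℝ := fun z =>
  -(z + 1)⁻¹ - Real.arctan (z / Real.sqrt (1 + 2 * z)) / Real.sqrt (1 + 2 * z)

private lemma arctan_nonneg' {x : ℝ} (hx : 0 ≤ x) : 0 ≤ Real.arctan x := by
  rw [← Real.arctan_zero]
  exact Real.arctan_strictMono.monotone hx

private lemma splitF_hasDerivAt {x : ℝ} (hx : 0 ≤ x) :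
    HasDerivAt splitF
      (x / ((1 + 2 * x) * (x + 1) ^ 2) +
        Real.arctan (x / Real.sqrt (1 + 2 * x)) / (1 + 2 * x) ^ ((3 : ℝ) / 2)) x := by
  have h1 : (0:ℝ) < 1 + 2 * x := by linarith
  set s := Real.sqrt (1 + 2 * x) with hs
  have hspos : 0 < s := Real.sqrt_pos.mpr h1
  have hsq : s ^ 2 = 1 + 2 * x := Real.sq_sqrt h1.le
  have hds : HasDerivAt (fun z : ℝ => Real.sqrt (1 + 2 * z)) (1 / s) x := by
    have h2 : HasDerivAt (fun z : ℝ => 1 + 2 * z) 2 x := by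
      simpa using ((hasDerivAt_id x).const_mul 2).const_add 1
    have := (Real.hasDerivAt_sqrt (by positivity : (1:ℝ) + 2 * x ≠ 0)).comp x h2
    convert this using 1 <;> try rfl
    rw [← hs]
    field_simp
  have hrpow : (1 + 2 * x) ^ ((3 : ℝ) / 2) = s ^ 3 := by
    rw [show ((3:ℝ)/2) = (1/2) * 3 by norm_num, Real.rpow_mul h1.le,
      ← Real.sqrt_eq_rpow, ← hs]
    exact_mod_cast Real.rpow_natCast s 3
  -- derivative of g = z / s
  have hdg : HasDerivAt (fun z : ℝ => z / Real.sqrt (1 + 2 * z))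
      ((1 + x) / s ^ 3) x := by
    have h0 := (hasDerivAt_id x).div hds hspos.ne'
    simp only [id_eq, one_mul] at h0
    rw [← hs] at h0
    convert h0 using 1 <;> try rfl
    field_simp
    linear_combination (-1) * hsq
  -- derivative of arctan g
  have hdat : HasDerivAt (fun z : ℝ => Real.arctan (z / Real.sqrt (1 + 2 * z)))
      (1 / (s * (1 + x))) x := by
    have := (Real.hasDerivAt_arctan (x / s)).comp x hdg
    convert this using 1 <;> try rfl
    have hxx : 1 + (x / s) ^ 2 = (s ^ 2 + x ^ 2) / s ^ 2 := by field_simp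
    rw [hxx, hsq]
    have h3 : 1 + 2 * x + x ^ 2 = (1 + x) ^ 2 := by ring
    rw [h3]
    field_simp
    linear_combination hsq
  -- derivative of arctan g / s
  have hdiv : HasDerivAt (fun z : ℝ =>
      Real.arctan (z / Real.sqrt (1 + 2 * z)) / Real.sqrt (1 + 2 * z))
      ((1 / (s * (1 + x)) * s - Real.arctan (x / s) * (1 / s)) / s ^ 2) x :=
    hdat.div hds hspos.ne'
  -- derivative of -(z+1)⁻¹
  have hinv : HasDerivAt (fun z : ℝ => -(z + 1)⁻¹) (((x + 1) ^ 2)⁻¹) x := by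
    have h := (((hasDerivAt_id x).add_const 1).inv
      (by positivity : x + 1 ≠ 0)).neg
    convert h using 1 <;> try rfl
    field_simp
    rw [id, div_self (by positivity)]
  have := hinv.sub hdiv
  convert this using 1 <;> try rfl
  rw [hrpow, ← hsq]
  have hx1 : x + 1 ≠ 0 := by positivity
  field_simp
  linear_combination (-((1 + x) * s)) * hsq

theorem split_charge_final_integral :
    ∫ z in Set.Ioi (0 : ℝ),
      (z / ((1 + 2 * z) * (z + 1) ^ 2) +
        Real.arctan (z / Real.sqrt (1 + 2 * z)) / (1 + 2 * z) ^ ((3 : ℝ) / 2)) = 1 := by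
  have hderiv : ∀ x ∈ Set.Ici (0:ℝ), HasDerivAt splitF
      (x / ((1 + 2 * x) * (x + 1) ^ 2) +
        Real.arctan (x / Real.sqrt (1 + 2 * x)) / (1 + 2 * x) ^ ((3 : ℝ) / 2)) x :=
    fun x hx => splitF_hasDerivAt hx
  have hnonneg : ∀ x ∈ Set.Ioi (0:ℝ),
      0 ≤ x / ((1 + 2 * x) * (x + 1) ^ 2) +
        Real.arctan (x / Real.sqrt (1 + 2 * x)) / (1 + 2 * x) ^ ((3 : ℝ) / 2) := by
    intro x hx
    have hx0 : (0:ℝ) < x := hx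
    have h1 : (0:ℝ) < 1 + 2 * x := by linarith
    have ha : 0 ≤ Real.arctan (x / Real.sqrt (1 + 2 * x)) :=
      arctan_nonneg' (by positivity)
    have hr : (0:ℝ) < (1 + 2 * x) ^ ((3 : ℝ) / 2) := Real.rpow_pos_of_pos h1 _
    positivity
  have hsqrt : Tendsto (fun z : ℝ => Real.sqrt (1 + 2 * z)) atTop atTop := by
    apply Filter.tendsto_atTop_atTop.2
    intro b
    refine ⟨b ^ 2, fun a ha => ?_⟩
    have h1 : b ≤ Real.sqrt (b ^ 2) := by
      rw [Real.sqrt_sq_eq_abs]; exact le_abs_self b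
    refine h1.trans (Real.sqrt_le_sqrt ?_)
    nlinarith [sq_nonneg b]
  have htend : Tendsto splitF atTop (nhds 0) := by
    have h1 : Tendsto (fun z : ℝ => -(z + 1)⁻¹) atTop (nhds 0) := by
      have := (tendsto_atTop_add_const_right atTop (1:ℝ) tendsto_id).inv_tendsto_atTop
      simpa using this.neg
    have h2 : Tendsto (fun z : ℝ =>
        Real.arctan (z / Real.sqrt (1 + 2 * z)) / Real.sqrt (1 + 2 * z)) atTop (nhds 0) := by
      apply squeeze_zero_norm
        (a := fun z => Real.pi / 2 * (Real.sqrt (1 + 2 * z))⁻¹)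
      · intro z
        have hb : |Real.arctan (z / Real.sqrt (1 + 2 * z))| ≤ Real.pi / 2 := by
          rw [abs_le]
          exact ⟨(Real.arctan_mem_Ioo _).1.le, (Real.arctan_mem_Ioo _).2.le⟩
        rw [norm_div, Real.norm_eq_abs, Real.norm_eq_abs,
          abs_of_nonneg (Real.sqrt_nonneg _), div_eq_mul_inv]
        exact mul_le_mul_of_nonneg_right hb (by positivity)
      · have := hsqrt.inv_tendsto_atTop
        simpa using this.const_mul (Real.pi / 2)
    have := h1.sub h2
    simpa using (show Tendsto splitF atTop (nhds (0 - 0)) from this)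
  have key := integral_Ioi_of_hasDerivAt_of_nonneg'
    (fun x hx => hderiv x hx) hnonneg htend
  rw [key]
  have h0 : splitF 0 = -1 := by
    simp [splitF]
  rw [h0]
  ring
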